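/- Let S be a pomonoid and A_S an S-poset. For a subset H ⊆ A×A, define a relation σ on A by: a σ b iff a = b, or there exist s₁,…,sₙ, t₁,…,tₘ ∈ S and pairs (cᵢ,dᵢ), (pⱼ,qⱼ) ∈ H such that a ≤ c₁s₁, d₁s₁ ≤ c₂s₂, …, dₙsₙ ≤ b and b ≤ p₁t₁, q₁t₁ ≤ p₂t₂, …, qₘtₘ ≤ a. Then σ is an equivalence relation on A that is compatible with the S-action. -/

import Mathlib

/-- A one-way chain of inequalities through pairs of `H`:
`a ≤ c₁s₁, d₁s₁ ≤ c₂s₂, …, dₙsₙ ≤ b` with every `(cᵢ, dᵢ) ∈ H`. -/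
def ChainLe {S A : Type} [PartialOrder A] (act : A → S → A) (H : Set (A × A))
    (a b : A) : Prop :=
  ∃ n : ℕ, ∃ c d : Fin (n + 1) → A, ∃ s : Fin (n + 1) → S,
    (∀ i, (c i, d i) ∈ H) ∧
    a ≤ act (c 0) (s 0) ∧
    (∀ i : Fin n, act (d i.castSucc) (s i.castSucc) ≤ act (c i.succ) (s i.succ)) ∧
    act (d (Fin.last n)) (s (Fin.last n)) ≤ b


def StepRel {S A : Type} [PartialOrder A] (act : A → S → A) (H : Set (A × A))
    (a b : A) : Prop :=
  ∃ c d : A, ∃ t : S, (c, d) ∈ H ∧ a ≤ act c t ∧ act d t ≤ b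

theorem chainLe_iff {S A : Type} [PartialOrder A] (act : A → S → A) (H : Set (A × A))
    (a b : A) : ChainLe act H a b ↔ Relation.TransGen (StepRel act H) a b := by
  constructor
  · rintro ⟨n, c, d, s, hH, hfirst, hmid, hlast⟩
    induction n generalizing a with
    | zero => exact Relation.TransGen.single ⟨c 0, d 0, s 0, hH 0, hfirst, hlast⟩
    | succ n ih =>
      refine Relation.TransGen.head ⟨c 0, d 0, s 0, hH 0, hfirst, le_refl _⟩ ?_
      refine ih (act (d 0) (s 0)) (fun i => c i.succ) (fun i => d i.succ) (fun i => s i.succ)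
        (fun i => hH i.succ) ?_ ?_ ?_
      · exact hmid 0
      · intro i
        have := hmid i.succ
        rwa [← Fin.succ_castSucc] at this
      · have := hlast
        rwa [← Fin.succ_last] at this
  · intro h
    induction h using Relation.TransGen.head_induction_on with
    | single h =>
      obtain ⟨c, d, t, hcd, h1, h2⟩ := h
      exact ⟨0, fun _ => c, fun _ => d, fun _ => t, fun _ => hcd, h1, fun i => i.elim0, h2⟩
    | head hstep _ ih =>
      obtain ⟨c0, d0, t0, hcd, h1, h2⟩ := hstep
      obtain ⟨n, c, d, s, hH, hfirst, hmid, hlast⟩ := ih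
      refine ⟨n + 1, Fin.cons c0 c, Fin.cons d0 d, Fin.cons t0 s, ?_, ?_, ?_, ?_⟩
      · intro i
        induction i using Fin.cases with
        | zero => simpa using hcd
        | succ j => simpa using hH j
      · simpa using h1
      · intro i
        induction i using Fin.cases with
        | zero => simpa using h2.trans hfirst
        | succ j =>
          have := hmid j
          simp only [← Fin.succ_castSucc, Fin.cons_succ]
          simpa using this
      · rw [← Fin.succ_last]
        simpa using hlast

theorem chainLe_trans {S A : Type} [PartialOrder A] {act : A → S → A} {H : Set (A × A)}
    {a b c : A} (h1 : ChainLe act H a b) (h2 : ChainLe act H b c) : ChainLe act H a c := by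
  rw [chainLe_iff] at *
  exact h1.trans h2

theorem chainLe_act {S A : Type} [Monoid S] [PartialOrder S] [PartialOrder A]
    [CovariantClass S S (Function.swap (· * ·)) (· ≤ ·)]
    {act : A → S → A}
    (act_mul : ∀ (a : A) (s t : S), act (act a s) t = act a (s * t))
    (act_monoA : ∀ (s : S) {a b : A}, a ≤ b → act a s ≤ act b s)
    {H : Set (A × A)} {a b : A} (u : S) (h : ChainLe act H a b) :
    ChainLe act H (act a u) (act b u) := by
  obtain ⟨n, c, d, s, hH, hfirst, hmid, hlast⟩ := h
  refine ⟨n, c, d, fun i => s i * u, hH, ?_, ?_, ?_⟩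
  · rw [← act_mul]; exact act_monoA u hfirst
  · intro i; rw [← act_mul, ← act_mul]; exact act_monoA u (hmid i)
  · rw [← act_mul]; exact act_monoA u hlast

/-- The relation `σ`: `a σ b` iff `a = b` or there are chains of inequalities
through `H`-pairs from `a` to `b` and from `b` to `a`. -/
def SigmaRel {S A : Type} [PartialOrder A] (act : A → S → A) (H : Set (A × A))
    (a b : A) : Prop :=
  a = b ∨ (ChainLe act H a b ∧ ChainLe act H b a)

/-- `σ` is an equivalence relation on `A` compatible with the `S`-action. -/
theorem sigmaRel_equivalence_and_compatible
    {S A : Type} [Monoid S] [PartialOrder S] [PartialOrder A]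
    [CovariantClass S S (· * ·) (· ≤ ·)]
    [CovariantClass S S (Function.swap (· * ·)) (· ≤ ·)]
    (act : A → S → A)
    (act_mul : ∀ (a : A) (s t : S), act (act a s) t = act a (s * t))
    (act_one : ∀ a : A, act a 1 = a)
    (act_monoA : ∀ (s : S) {a b : A}, a ≤ b → act a s ≤ act b s)
    (act_monoS : ∀ (a : A) {s t : S}, s ≤ t → act a s ≤ act a t)
    (H : Set (A × A)) :
    Equivalence (SigmaRel act H) ∧
      ∀ (a b : A) (s : S), SigmaRel act H a b → SigmaRel act H (act a s) (act b s) := by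
  constructor
  · refine ⟨fun a => Or.inl rfl, ?_, ?_⟩
    · rintro a b (rfl | ⟨h1, h2⟩)
      · exact Or.inl rfl
      · exact Or.inr ⟨h2, h1⟩
    · rintro a b c (rfl | ⟨h1, h2⟩) hbc
      · exact hbc
      · rcases hbc with rfl | ⟨h3, h4⟩
        · exact Or.inr ⟨h1, h2⟩
        · exact Or.inr ⟨chainLe_trans h1 h3, chainLe_trans h4 h2⟩
  · rintro a b s (rfl | ⟨h1, h2⟩)
    · exact Or.inl rfl
    · exact Or.inr ⟨chainLe_act act_mul act_monoA s h1, chainLe_act act_mul act_monoA s h2⟩
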